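/- Let K ≥ 2, Y = {1,...,K}, fix 1 ≤ c ≤ K−1, let q : Y → ℝ be nonnegative with p̄(S) = (1/C(K−1,c)) · Σ_{y∉S} q(y) for c-element subsets S, and let ℓ : Y → ℝ be any function (interpreted as ℓ(y) = loss of a fixed prediction w.r.t. label y). Define the multi-complementary loss ℓ̄(S) = Σ_{y∈Y} ℓ(y) − ((K−1)/c) · Σ_{y∈S} ℓ(y). Then Σ_{y∈Y} ℓ(y)·q(y) = Σ_{S : |S|=c} ℓ̄(S)·p̄(S). -/

import Mathlib

open Finset

lemma cnt1 (K c : ℕ) (z : Fin K) :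
    ((Finset.univ.powersetCard c).filter (fun S => z ∉ S)).card = (K - 1).choose c := by
  have h : (Finset.univ.powersetCard c).filter (fun S => z ∉ S)
      = ({z}ᶜ : Finset (Fin K)).powersetCard c := by
    ext T
    simp [Finset.mem_powersetCard, Finset.subset_compl_singleton, and_comm]
  rw [h, Finset.card_powersetCard, Finset.card_compl, Finset.card_singleton,
    Fintype.card_fin]

lemma cnt2 (K c : ℕ) (hc1 : 1 ≤ c) (y z : Fin K) (hyz : y ≠ z) :
    ((Finset.univ.powersetCard c).filter (fun S => y ∈ S ∧ z ∉ S)).card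
      = (K - 2).choose (c - 1) := by
  have hcard : (({y, z} : Finset (Fin K))ᶜ).card = K - 2 := by
    rw [Finset.card_compl, Finset.card_insert_of_notMem (by simp [hyz]),
      Finset.card_singleton, Fintype.card_fin]
  rw [← hcard, ← Finset.card_powersetCard]
  apply Finset.card_bij (fun S _ => S.erase y)
  · intro S hS
    simp only [Finset.mem_filter, Finset.mem_powersetCard] at hS
    obtain ⟨⟨-, hSc⟩, hyS, hzS⟩ := hS
    simp only [Finset.mem_powersetCard]
    constructor
    · intro w hw
      simp only [Finset.mem_erase] at hw
      simp only [Finset.mem_compl, Finset.mem_insert, Finset.mem_singleton]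
      push_neg
      exact ⟨hw.1, fun h => hzS (h ▸ hw.2)⟩
    · rw [Finset.card_erase_of_mem hyS, hSc]
  · intro S hS T hT h
    simp only [Finset.mem_filter] at hS hT
    rw [← Finset.insert_erase hS.2.1, ← Finset.insert_erase hT.2.1, h]
  · intro T hT
    simp only [Finset.mem_powersetCard] at hT
    obtain ⟨hTc, hTcard⟩ := hT
    have hyT : y ∉ T := fun h => by simpa using hTc h
    have hzT : z ∉ T := fun h => by
      have := hTc h; simp [Finset.mem_compl] at this
    refine ⟨insert y T, ?_, by simp [Finset.erase_insert hyT]⟩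
    simp only [Finset.mem_filter, Finset.mem_powersetCard]
    refine ⟨⟨Finset.subset_univ _, ?_⟩, Finset.mem_insert_self _ _, ?_⟩
    · rw [Finset.card_insert_of_notMem hyT, hTcard]
      omega
    · simp [hyz.symm, hzT]

theorem stmt_4 (K : ℕ) (hK : 2 ≤ K) (c : ℕ) (hc1 : 1 ≤ c) (hc2 : c ≤ K - 1)
    (q : Fin K → ℝ) (hq : ∀ y, 0 ≤ q y) (ℓ : Fin K → ℝ) :
    (∑ y, ℓ y * q y)
      = ∑ S ∈ Finset.univ.powersetCard c,
          ((∑ y, ℓ y) - (((K : ℝ) - 1) / (c : ℝ)) * ∑ y ∈ S, ℓ y) *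
            ((((K - 1).choose c : ℝ))⁻¹ * ∑ z ∈ Sᶜ, q z) := by
  classical
  set P := (Finset.univ : Finset (Fin K)).powersetCard c with hP
  have hcompl : ∀ S : Finset (Fin K), Sᶜ = Finset.univ.filter (fun z => z ∉ S) := by
    intro S; ext w; simp
  have hmem : ∀ (g : Fin K → ℝ) (S : Finset (Fin K)),
      ∑ y ∈ S, g y = ∑ y, if y ∈ S then g y else 0 := by
    intro g S
    rw [Finset.sum_ite_mem, Finset.univ_inter]
  have h1 : ∑ S ∈ P, (∑ z ∈ Sᶜ, q z) = ((K - 1).choose c : ℝ) * ∑ z, q z := by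
    calc ∑ S ∈ P, (∑ z ∈ Sᶜ, q z)
        = ∑ S ∈ P, ∑ z, if z ∉ S then q z else 0 := by
          refine Finset.sum_congr rfl fun S _ => ?_
          rw [hcompl S, Finset.sum_filter]
      _ = ∑ z, ∑ S ∈ P, if z ∉ S then q z else 0 := Finset.sum_comm
      _ = ∑ z, ((P.filter (fun S => z ∉ S)).card : ℝ) * q z := by
          refine Finset.sum_congr rfl fun z _ => ?_
          rw [← Finset.sum_filter, Finset.sum_const, nsmul_eq_mul]
      _ = ((K - 1).choose c : ℝ) * ∑ z, q z := by
          rw [Finset.mul_sum]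
          refine Finset.sum_congr rfl fun z _ => ?_
          rw [cnt1 K c z]
  have h2 : ∑ S ∈ P, ((∑ y ∈ S, ℓ y) * ∑ z ∈ Sᶜ, q z)
      = ((K - 2).choose (c - 1) : ℝ) * ((∑ y, ℓ y) * (∑ z, q z) - ∑ y, ℓ y * q y) := by
    calc ∑ S ∈ P, ((∑ y ∈ S, ℓ y) * ∑ z ∈ Sᶜ, q z)
        = ∑ S ∈ P, ∑ y, ∑ z, if y ∈ S ∧ z ∉ S then ℓ y * q z else 0 := by
          refine Finset.sum_congr rfl fun S _ => ?_
          rw [Finset.sum_mul, hmem (fun y => ℓ y * ∑ z ∈ Sᶜ, q z) S]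
          refine Finset.sum_congr rfl fun y _ => ?_
          rw [hcompl S, Finset.sum_filter]
          by_cases hyS : y ∈ S <;> simp [hyS, Finset.mul_sum]
      _ = ∑ y, ∑ z, ∑ S ∈ P, if y ∈ S ∧ z ∉ S then ℓ y * q z else 0 := by
          rw [Finset.sum_comm]
          exact Finset.sum_congr rfl fun y _ => Finset.sum_comm
      _ = ∑ y, ∑ z, ((P.filter (fun S => y ∈ S ∧ z ∉ S)).card : ℝ) * (ℓ y * q z) := by
          refine Finset.sum_congr rfl fun y _ => Finset.sum_congr rfl fun z _ => ?_
          rw [← Finset.sum_filter, Finset.sum_const, nsmul_eq_mul]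
      _ = ∑ y, ∑ z, (((K - 2).choose (c - 1) : ℝ) * (ℓ y * q z)
            - if y = z then ((K - 2).choose (c - 1) : ℝ) * (ℓ y * q z) else 0) := by
          refine Finset.sum_congr rfl fun y _ => Finset.sum_congr rfl fun z _ => ?_
          by_cases hyz : y = z
          · subst hyz
            have he : P.filter (fun S => y ∈ S ∧ y ∉ S) = ∅ := by
              apply Finset.filter_false_of_mem; tauto
            simp [he]
          · rw [cnt2 K c hc1 y z hyz]
            simp [hyz]
      _ = ((K - 2).choose (c - 1) : ℝ) * ((∑ y, ℓ y) * (∑ z, q z) - ∑ y, ℓ y * q y) := by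
          have hin : ∀ y : Fin K,
              (∑ z, (((K - 2).choose (c - 1) : ℝ) * (ℓ y * q z)
                - if y = z then ((K - 2).choose (c - 1) : ℝ) * (ℓ y * q z) else 0))
              = ((K - 2).choose (c - 1) : ℝ) * (ℓ y * (∑ z, q z) - ℓ y * q y) := by
            intro y
            rw [Finset.sum_sub_distrib, Finset.sum_ite_eq, if_pos (Finset.mem_univ y),
              ← Finset.mul_sum, ← Finset.mul_sum]
            ring
          rw [Finset.sum_congr rfl fun y _ => hin y, ← Finset.mul_sum,
            Finset.sum_sub_distrib, ← Finset.sum_mul]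
  have hC1 : (((K - 1).choose c : ℕ) : ℝ) ≠ 0 :=
    Nat.cast_ne_zero.2 (Nat.choose_pos hc2).ne'
  have hc0 : ((c : ℕ) : ℝ) ≠ 0 := Nat.cast_ne_zero.2 (by omega)
  have hnat : (K - 1) * (K - 2).choose (c - 1) = (K - 1).choose c * c := by
    have h := Nat.add_one_mul_choose_eq (K - 2) (c - 1)
    have e1 : K - 2 + 1 = K - 1 := by omega
    have e2 : c - 1 + 1 = c := by omega
    rw [e1, e2] at h
    exact h
  have hid : ((K : ℝ) - 1) * ((K - 2).choose (c - 1) : ℝ)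
      = ((K - 1).choose c : ℝ) * (c : ℝ) := by
    have hK1 : ((K - 1 : ℕ) : ℝ) = (K : ℝ) - 1 := by
      rw [Nat.cast_sub (by omega), Nat.cast_one]
    calc ((K : ℝ) - 1) * ((K - 2).choose (c - 1) : ℝ)
        = (((K - 1) * (K - 2).choose (c - 1) : ℕ) : ℝ) := by
          rw [← hK1]; push_cast; ring
      _ = (((K - 1).choose c * c : ℕ) : ℝ) := by rw [hnat]
      _ = ((K - 1).choose c : ℝ) * (c : ℝ) := by push_cast; ring
  have expand : ∀ S : Finset (Fin K),
      ((∑ y, ℓ y) - (((K : ℝ) - 1) / (c : ℝ)) * ∑ y ∈ S, ℓ y) *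
        ((((K - 1).choose c : ℝ))⁻¹ * ∑ z ∈ Sᶜ, q z)
      = (((K - 1).choose c : ℝ))⁻¹ * (∑ y, ℓ y) * (∑ z ∈ Sᶜ, q z)
        - (((K : ℝ) - 1) / (c : ℝ)) * (((K - 1).choose c : ℝ))⁻¹ *
            ((∑ y ∈ S, ℓ y) * ∑ z ∈ Sᶜ, q z) := by
    intro S; ring
  rw [Finset.sum_congr rfl fun S _ => expand S, Finset.sum_sub_distrib,
    ← Finset.mul_sum, ← Finset.mul_sum, h1, h2]
  have k1 : (((K - 1).choose c : ℕ) : ℝ)⁻¹ * ((K - 1).choose c : ℝ) = 1 :=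
    inv_mul_cancel₀ hC1
  have k2 : ((K : ℝ) - 1) / (c : ℝ) * (((K - 1).choose c : ℕ) : ℝ)⁻¹ *
      ((K - 2).choose (c - 1) : ℝ) = 1 := by
    field_simp
    linear_combination hid
  linear_combination
    ((∑ y, ℓ y) * (∑ z, q z) - ∑ y, ℓ y * q y) * k2
      - ((∑ y, ℓ y) * (∑ z, q z)) * k1
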